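/- In a multiplicative Hom-Jordan superalgebra (A,∘,α), with left-multiplication operators L(x)(w) = x∘w and L(x,y) = L(α(x))L(y) - (-1)^{|x||y|}L(α(y))L(x), the graded cyclic sum ↻_{w,x,z} (-1)^{|w|(|x|+|z|)} L(α(x), w∘z) ∘ α = 0 holds as an operator identity for all homogeneous w,x,z. -/
import Mathlib


def sgn (K : Type*) [Field K] (i j : ZMod 2) : K := (-1 : K) ^ (i * j).val

def IsBilin (K : Type*) {A : Type*} [Field K] [AddCommGroup A] [Module K A]
    (f : A → A → A) : Prop :=
  (∀ (c : K) (x y : A), f (c • x) y = c • f x y) ∧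
  (∀ x x' y : A, f (x + x') y = f x y + f x' y) ∧
  (∀ (c : K) (x y : A), f x (c • y) = c • f x y) ∧
  (∀ x y y' : A, f x (y + y') = f x y + f x y')

def IsTrilin (K : Type*) {A : Type*} [Field K] [AddCommGroup A] [Module K A]
    (f : A → A → A → A) : Prop :=
  (∀ (c : K) (x y z : A), f (c • x) y z = c • f x y z) ∧
  (∀ x x' y z : A, f (x + x') y z = f x y z + f x' y z) ∧
  (∀ (c : K) (x y z : A), f x (c • y) z = c • f x y z) ∧
  (∀ x y y' z : A, f x (y + y') z = f x y z + f x y' z) ∧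
  (∀ (c : K) (x y z : A), f x y (c • z) = c • f x y z) ∧
  (∀ x y z z' : A, f x y (z + z') = f x y z + f x y z')

def asc {A : Type*} [AddCommGroup A] (mul : A → A → A) (x y z : A) : A :=
  mul (mul x y) z - mul x (mul y z)

def hasc {A : Type*} [AddCommGroup A] (mul : A → A → A) (α : A → A) (x y z : A) : A :=
  mul (mul x y) (α z) - mul (α x) (mul y z)

def br (K : Type*) {A : Type*} [Field K] [AddCommGroup A] [Module K A]
    (mul : A → A → A) (i j : ZMod 2) (x y : A) : A :=
  (2 : K)⁻¹ • (mul x y - sgn K i j • mul y x)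

def jp (K : Type*) {A : Type*} [Field K] [AddCommGroup A] [Module K A]
    (mul : A → A → A) (i j : ZMod 2) (x y : A) : A :=
  (2 : K)⁻¹ • (mul x y + sgn K i j • mul y x)

lemma sgn_zero_left {K : Type*} [Field K] (b : ZMod 2) : sgn K 0 b = 1 := by simp [sgn]
lemma sgn_zero_right {K : Type*} [Field K] (a : ZMod 2) : sgn K a 0 = 1 := by simp [sgn]
lemma sgn_one_one {K : Type*} [Field K] : sgn K 1 1 = -1 := by
  have h : ((1 : ZMod 2) * 1).val = 1 := rfl
  rw [sgn, h, pow_one]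
lemma z11 : (1 + 1 : ZMod 2) = 0 := rfl

lemma key {K A : Type*} [Field K] [AddCommGroup A] [Module K A]
    (𝒜 : ZMod 2 → Submodule K A)
    (mul : A → A → A)
    (hbil : ∀ (c : K) (x y : A), mul x (c • y) = c • mul x y)
    (hgr : ∀ (i j : ZMod 2) (x y : A), x ∈ 𝒜 i → y ∈ 𝒜 j → mul x y ∈ 𝒜 (i + j))
    (α : A → A)
    (hαeven : ∀ (i : ZMod 2) (x : A), x ∈ 𝒜 i → α x ∈ 𝒜 i)
    (hcomm : ∀ (i j : ZMod 2) (x y : A), x ∈ 𝒜 i → y ∈ 𝒜 j →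
      mul x y = sgn K i j • mul y x)
    (hjordan : ∀ (i j k l : ZMod 2) (x y z t : A),
      x ∈ 𝒜 i → y ∈ 𝒜 j → z ∈ 𝒜 k → t ∈ 𝒜 l →
      sgn K l (i + k) • hasc mul α (mul x y) (α z) (α t)
        + sgn K i (j + k) • hasc mul α (mul y t) (α z) (α x)
        + sgn K j (l + k) • hasc mul α (mul t x) (α z) (α y) = 0)
    (i j k l : ZMod 2) (w x z y : A)
    (hw : w ∈ 𝒜 i) (hx : x ∈ 𝒜 j) (hz : z ∈ 𝒜 k) (hy : y ∈ 𝒜 l) :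
    sgn K i (j + k) •
        (mul (α (α x)) (mul (mul w z) (α y))
          - sgn K j (i + k) • mul (α (mul w z)) (mul (α x) (α y)))
      + sgn K j (k + i) •
        (mul (α (α z)) (mul (mul x w) (α y))
          - sgn K k (j + i) • mul (α (mul x w)) (mul (α z) (α y)))
      + sgn K k (i + j) •
        (mul (α (α w)) (mul (mul z x) (α y))
          - sgn K i (k + j) • mul (α (mul z x)) (mul (α w) (α y))) = 0 := by
  have C1 := hcomm j (i + k + l) (α (α x)) (mul (mul w z) (α y))
    (hαeven j _ (hαeven j x hx)) (hgr (i + k) l _ _ (hgr i k w z hw hz) (hαeven l y hy))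
  have C2 := hcomm j l (α x) (α y) (hαeven j x hx) (hαeven l y hy)
  have C3 := hcomm k (j + i + l) (α (α z)) (mul (mul x w) (α y))
    (hαeven k _ (hαeven k z hz)) (hgr (j + i) l _ _ (hgr j i x w hx hw) (hαeven l y hy))
  have C4 := hcomm k l (α z) (α y) (hαeven k z hz) (hαeven l y hy)
  have C5 := hcomm i (k + j + l) (α (α w)) (mul (mul z x) (α y))
    (hαeven i _ (hαeven i w hw)) (hgr (k + j) l _ _ (hgr k j z x hz hx) (hαeven l y hy))
  have C6 := hcomm i l (α w) (α y) (hαeven i w hw) (hαeven l y hy)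
  have H := hjordan i k l j w z y x hw hz hy hx
  simp only [hasc] at H
  rw [C1, C2, C3, C4, C5, C6]
  simp only [hbil]
  have hc : ∀ a : ZMod 2, a = 0 ∨ a = 1 := by decide
  rcases hc i with rfl | rfl <;> rcases hc j with rfl | rfl <;>
    rcases hc k with rfl | rfl <;> rcases hc l with rfl | rfl <;>
  · simp only [sgn_zero_left, sgn_zero_right, sgn_one_one, z11, add_zero, zero_add,
      one_smul, neg_smul, neg_neg] at H ⊢
    first
      | linear_combination (norm := module) H
      | linear_combination (norm := module) (-1 : K) • H

/-- Lemma 7.2: the operator identity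
`↻_{w,x,z} (-1)^{|w|(|x|+|z|)} L(α(x), w∘z) ∘ α = 0`
in a multiplicative Hom-Jordan superalgebra, evaluated at an arbitrary `y`. -/
theorem stmt14 {K A : Type*} [Field K] [AddCommGroup A] [Module K A]
    (h2 : (2 : K) ≠ 0) (h3 : (3 : K) ≠ 0)
    (𝒜 : ZMod 2 → Submodule K A) (hds : DirectSum.IsInternal 𝒜)
    (mul : A → A → A) (hbil : IsBilin K mul)
    (hgr : ∀ (i j : ZMod 2) (x y : A), x ∈ 𝒜 i → y ∈ 𝒜 j → mul x y ∈ 𝒜 (i + j))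
    (α : A → A)
    (hαsmul : ∀ (c : K) (x : A), α (c • x) = c • α x)
    (hαadd : ∀ x y : A, α (x + y) = α x + α y)
    (hαeven : ∀ (i : ZMod 2) (x : A), x ∈ 𝒜 i → α x ∈ 𝒜 i)
    (hαmul : ∀ x y : A, α (mul x y) = mul (α x) (α y))
    (hcomm : ∀ (i j : ZMod 2) (x y : A), x ∈ 𝒜 i → y ∈ 𝒜 j →
      mul x y = sgn K i j • mul y x)
    (hjordan : ∀ (i j k l : ZMod 2) (x y z t : A),
      x ∈ 𝒜 i → y ∈ 𝒜 j → z ∈ 𝒜 k → t ∈ 𝒜 l →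
      sgn K l (i + k) • hasc mul α (mul x y) (α z) (α t)
        + sgn K i (j + k) • hasc mul α (mul y t) (α z) (α x)
        + sgn K j (l + k) • hasc mul α (mul t x) (α z) (α y) = 0)
    (i j k : ZMod 2) (w x z : A)
    (hw : w ∈ 𝒜 i) (hx : x ∈ 𝒜 j) (hz : z ∈ 𝒜 k) (y : A) :
    sgn K i (j + k) •
        (mul (α (α x)) (mul (mul w z) (α y))
          - sgn K j (i + k) • mul (α (mul w z)) (mul (α x) (α y)))
      + sgn K j (k + i) •
        (mul (α (α z)) (mul (mul x w) (α y))
          - sgn K k (j + i) • mul (α (mul x w)) (mul (α z) (α y)))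
      + sgn K k (i + j) •
        (mul (α (α w)) (mul (mul z x) (α y))
          - sgn K i (k + j) • mul (α (mul z x)) (mul (α w) (α y))) = 0 := by
  have hy : y ∈ ⨆ l, 𝒜 l := hds.submodule_iSup_eq_top ▸ Submodule.mem_top
  refine Submodule.iSup_induction (x := y) 𝒜 hy ?_ ?_ ?_
  · intro l v hv
    exact key 𝒜 mul hbil.2.2.1 hgr α hαeven hcomm hjordan i j k l w x z v hw hx hz hv
  · have hα0 : α 0 = 0 := by
      rw [show (0 : A) = (0 : K) • (0 : A) by simp, hαsmul]; simp
    have hm0 : ∀ a : A, mul a 0 = 0 := fun a => by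
      rw [show (0 : A) = (0 : K) • (0 : A) by simp, hbil.2.2.1]; simp
    simp [hα0, hm0]
  · intro a b ha hb
    simp only [hαadd, hbil.2.2.2] at ha hb ⊢
    linear_combination (norm := module) ha + hb
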